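/- Fix $n \geq 2$ and $d > 2n-1$, and let $\mathbb{K}$ be an algebraically closed field of characteristic zero. For every form $f$ in the subspace $W \subset \mathbb{K}[x_0,\ldots,x_n]_d$ of forms with vanishing coefficients on $x_0^{d-m}x_1^m$ for $0 \leq m \leq d-1$, the linear span of: (i) all degree-$d$ monomials except $x_0^d, x_0^{d-1}x_1, \ldots, x_0x_1^{d-1}$, and (ii) the polynomials $x_j \cdot \partial f/\partial x_i$ for $0 \leq i,j \leq n$, has codimension at least $d - 1 - (2n-2) > 0$ in $\mathbb{K}[x_0,\ldots,x_n]_d$; in particular it is a proper subspace. -/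

import Mathlib

open MvPolynomial

lemma coeff_pderiv' {σ K : Type*} [Field K] (i : σ) (u : σ →₀ ℕ) (p : MvPolynomial σ K) :
    coeff u (pderiv i p) = (u i + 1) * coeff (u + Finsupp.single i 1) p := by
  classical
  induction p using MvPolynomial.induction_on' with
  | add p q hp hq => simp [hp, hq, mul_add]
  | monomial s a =>
    rw [pderiv_monomial, coeff_monomial, coeff_monomial]
    by_cases h : u + Finsupp.single i 1 = s
    · have hsi : s i = u i + 1 := by
        have := DFunLike.congr_fun h i
        simpa using this.symm
      have hsu : s - Finsupp.single i 1 = u := by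
        ext x
        have hx := DFunLike.congr_fun h x
        simp only [Finsupp.add_apply, Finsupp.single_apply, Finsupp.tsub_apply] at hx ⊢
        omega
      rw [if_pos hsu, if_pos h.symm, hsi]
      push_cast
      ring
    · rw [if_neg (show ¬s = u + Finsupp.single i 1 from fun hh => h hh.symm), mul_zero]
      by_cases h' : s - Finsupp.single i 1 = u
      · rw [if_pos h']
        by_cases hsi : s i = 0
        · rw [hsi, Nat.cast_zero, mul_zero]
        · exfalso
          apply h
          ext x
          have hx := DFunLike.congr_fun h' x
          simp only [Finsupp.add_apply, Finsupp.single_apply, Finsupp.tsub_apply] at hx ⊢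
          rcases eq_or_ne i x with rfl | hix
          · simp only [if_true, eq_self_iff_true] at hx ⊢
            omega
          · simp only [if_neg hix] at hx ⊢
            omega
      · rw [if_neg h']

lemma sum_univ_eq_degree {N : Type*} [Fintype N] (u : N →₀ ℕ) : u.degree = ∑ i, u i :=
  Finset.sum_subset (Finset.subset_univ _) fun _ _ hx => Finsupp.notMem_support_iff.mp hx

lemma pderiv_isHomogeneous {σ K : Type*} [Field K] {d : ℕ} {p : MvPolynomial σ K}
    (hp : p.IsHomogeneous d) (i : σ) : (pderiv i p).IsHomogeneous (d - 1) := by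
  intro u hu
  rw [coeff_pderiv'] at hu
  have h2 : coeff (u + Finsupp.single i 1) p ≠ 0 := by
    intro h; rw [h, mul_zero] at hu; exact hu rfl
  have h3 := hp h2
  rw [map_add] at h3
  have h4 : (Finsupp.weight (1 : σ → ℕ)) (Finsupp.single i 1) = 1 := by
    rw [Finsupp.weight_apply, Finsupp.sum_single_index] <;> simp
  rw [h4] at h3
  omega

lemma rank_split {K M N : Type*} [Field K] [AddCommGroup M] [Module K M] [AddCommGroup N]
    [Module K N] (Φ : M →ₗ[K] N) (p : Submodule K M) [FiniteDimensional K p] :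
    Module.finrank K p
      = Module.finrank K (p.map Φ) + Module.finrank K ↥(p ⊓ LinearMap.ker Φ) := by
  have h := LinearMap.finrank_range_add_finrank_ker (Φ.domRestrict p)
  rw [LinearMap.range_domRestrict] at h
  have h2 : Module.finrank K ↥(LinearMap.ker (Φ.domRestrict p))
      = Module.finrank K ↥(p ⊓ LinearMap.ker Φ) := by
    rw [← Submodule.finrank_map_subtype_eq p (LinearMap.ker (Φ.domRestrict p)),
      LinearMap.ker_domRestrict, Submodule.map_comap_subtype]
  rw [← h, h2]


lemma fs_merge1 {N : Type*} (a b : N) (c1 c2 c3 e : ℕ) (h : c1 + c3 = e) :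
    (Finsupp.single a c1 + Finsupp.single b c2) + Finsupp.single a c3
      = Finsupp.single a e + Finsupp.single b c2 := by
  rw [add_right_comm, ← Finsupp.single_add, h]

lemma fs_merge2 {N : Type*} (a b : N) (c1 c2 c3 e : ℕ) (h : c2 + c3 = e) :
    (Finsupp.single a c1 + Finsupp.single b c2) + Finsupp.single b c3
      = Finsupp.single a c1 + Finsupp.single b e := by
  rw [add_assoc, ← Finsupp.single_add, h]

lemma fs_split1 {N : Type*} (a b : N) (c1 c2 c3 e : ℕ) (h : c1 + c2 = e) :
    Finsupp.single a e + Finsupp.single b c3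
      = Finsupp.single a c1 + (Finsupp.single a c2 + Finsupp.single b c3) := by
  rw [← add_assoc, ← Finsupp.single_add, h]

lemma fs_split2 {N : Type*} (a b : N) (c1 c2 c3 e : ℕ) (h : c1 + c2 = e) :
    Finsupp.single a c3 + Finsupp.single b e
      = Finsupp.single b c1 + (Finsupp.single a c3 + Finsupp.single b c2) := by
  rw [add_left_comm, ← Finsupp.single_add, h]



set_option maxHeartbeats 2000000

/-- for `n ≥ 2` and `d > 2n-1`, for EVERY form `f` in the space
`W` of degree-`d` forms with vanishing coefficients on `x₀^(d-m)x₁^m`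
(`0 ≤ m ≤ d-1`), the span of (i) all degree-`d` monomials except
`x₀ᵈ, …, x₀x₁^(d-1)` and (ii) the polynomials `xⱼ·∂f/∂xᵢ` is a proper subspace
of the degree-`d` forms, of codimension at least `d - 1 - (2n - 2) > 0`. -/
theorem stmt11 (K : Type*) [Field K] [IsAlgClosed K] [CharZero K]
    (n d : ℕ) (hn : 2 ≤ n) (hd : 2 * n - 1 < d)
    (f : MvPolynomial (Fin (n + 1)) K) (hf : f.IsHomogeneous d)
    (hfW : ∀ m, m ≤ d - 1 → f.coeff
      (Finsupp.single ⟨0, by omega⟩ (d - m) + Finsupp.single ⟨1, by omega⟩ m) = 0) :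
    Submodule.span K
        ({ p | ∃ u : Fin (n + 1) →₀ ℕ, (∑ i, u i) = d ∧
            (∀ m, m ≤ d - 1 →
              u ≠ Finsupp.single ⟨0, by omega⟩ (d - m) + Finsupp.single ⟨1, by omega⟩ m) ∧
            p = monomial u (1 : K) } ∪
         { p | ∃ i j : Fin (n + 1), p = X j * pderiv i f })
      < homogeneousSubmodule (Fin (n + 1)) K d ∧
    Module.finrank K
        (Submodule.span K
          ({ p | ∃ u : Fin (n + 1) →₀ ℕ, (∑ i, u i) = d ∧
              (∀ m, m ≤ d - 1 →
                u ≠ Finsupp.single ⟨0, by omega⟩ (d - m) + Finsupp.single ⟨1, by omega⟩ m) ∧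
              p = monomial u (1 : K) } ∪
           { p | ∃ i j : Fin (n + 1), p = X j * pderiv i f }))
        + (d - 1 - (2 * n - 2))
      ≤ Module.finrank K (homogeneousSubmodule (Fin (n + 1)) K d) := by
  classical
  set i0 : Fin (n + 1) := ⟨0, by omega⟩ with hi0
  set i1 : Fin (n + 1) := ⟨1, by omega⟩ with hi1
  have hv0 : (i0 : ℕ) = 0 := by rw [hi0]
  have hv1 : (i1 : ℕ) = 1 := by rw [hi1]
  have hi01 : i0 ≠ i1 := by
    intro h; have := congrArg Fin.val h; rw [hv0, hv1] at this; omega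
  set B : ℕ → (Fin (n + 1) →₀ ℕ) :=
    fun m => Finsupp.single i0 (d - m) + Finsupp.single i1 m with hB
  set Sm : Set (MvPolynomial (Fin (n + 1)) K) :=
    { p | ∃ u : Fin (n + 1) →₀ ℕ, (∑ i, u i) = d ∧
        (∀ m, m ≤ d - 1 → u ≠ B m) ∧ p = monomial u (1 : K) } with hSm
  set Sd : Set (MvPolynomial (Fin (n + 1)) K) :=
    { p | ∃ i j : Fin (n + 1), p = X j * pderiv i f } with hSd
  set T : Submodule K (MvPolynomial (Fin (n + 1)) K) := Submodule.span K (Sm ∪ Sd) with hT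
  set V : Submodule K (MvPolynomial (Fin (n + 1)) K) :=
    homogeneousSubmodule (Fin (n + 1)) K d with hV
  show T < V ∧ Module.finrank K T + (d - 1 - (2 * n - 2)) ≤ Module.finrank K V
  have hfW' : ∀ m, m ≤ d - 1 → coeff (B m) f = 0 := hfW
  have hB_i1 : ∀ m : ℕ, B m i1 = m := by
    intro m
    simp only [hB, Finsupp.add_apply, Finsupp.single_eq_same,
      Finsupp.single_eq_of_ne' hi01, zero_add]
  -- key vanishing for j with large index
  have key1 : ∀ (m : ℕ) (j : Fin (n + 1)), 2 ≤ (j : ℕ) →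
      ∀ g : MvPolynomial (Fin (n + 1)) K, coeff (B m) (X j * g) = 0 := by
    intro m j hj g
    have h0 : i0 ≠ j := by
      intro h; have := congrArg Fin.val h; rw [hv0] at this; omega
    have h1 : i1 ≠ j := by
      intro h; have := congrArg Fin.val h; rw [hv1] at this; omega
    rw [coeff_X_mul', if_neg]
    simp only [Finsupp.mem_support_iff, ne_eq, not_not, hB, Finsupp.add_apply,
      Finsupp.single_eq_of_ne' h0, Finsupp.single_eq_of_ne' h1, add_zero]
  -- key vanishing for small indices
  have key2 : ∀ m : ℕ, m < d - 1 → ∀ i j : Fin (n + 1), (i : ℕ) < 2 → (j : ℕ) < 2 →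
      coeff (B m) (X j * pderiv i f) = 0 := by
    intro m hm i j hi2 hj2
    have hi' : i = i0 ∨ i = i1 := by
      rcases (by omega : (i : ℕ) = 0 ∨ (i : ℕ) = 1) with h | h
      · exact Or.inl (Fin.ext (by rw [h, hv0]))
      · exact Or.inr (Fin.ext (by rw [h, hv1]))
    have hj' : j = i0 ∨ j = i1 := by
      rcases (by omega : (j : ℕ) = 0 ∨ (j : ℕ) = 1) with h | h
      · exact Or.inl (Fin.ext (by rw [h, hv0]))
      · exact Or.inr (Fin.ext (by rw [h, hv1]))
    rcases hj' with rfl | rfl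
    · have h1 : B m = Finsupp.single i0 1
          + (Finsupp.single i0 (d - m - 1) + Finsupp.single i1 m) := by
        simp only [hB]
        exact fs_split1 i0 i1 1 (d - m - 1) m (d - m) (by omega)
      rw [h1, coeff_X_mul, coeff_pderiv']
      rcases hi' with rfl | rfl
      · have h2 : (Finsupp.single i0 (d - m - 1) + Finsupp.single i1 m)
            + Finsupp.single i0 1 = B m := by
          simp only [hB]
          exact fs_merge1 i0 i1 (d - m - 1) m 1 (d - m) (by omega)
        rw [h2, hfW' m (by omega), mul_zero]
      · have h2 : (Finsupp.single i0 (d - m - 1) + Finsupp.single i1 m)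
            + Finsupp.single i1 1 = B (m + 1) := by
          simp only [hB]
          exact fs_merge2 i0 i1 (d - m - 1) m 1 (m + 1) (by omega)
        rw [h2, hfW' (m + 1) (by omega), mul_zero]
    · rcases Nat.eq_zero_or_pos m with rfl | hm1
      · rw [coeff_X_mul', if_neg]
        simp only [Finsupp.mem_support_iff, ne_eq, not_not, hB_i1]
      · have h1 : B m = Finsupp.single i1 1
            + (Finsupp.single i0 (d - m) + Finsupp.single i1 (m - 1)) := by
          simp only [hB]
          exact fs_split2 i0 i1 1 (m - 1) (d - m) m (by omega)
        rw [h1, coeff_X_mul, coeff_pderiv']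
        rcases hi' with rfl | rfl
        · have h2 : (Finsupp.single i0 (d - m) + Finsupp.single i1 (m - 1))
              + Finsupp.single i0 1 = B (m - 1) := by
            simp only [hB]
            exact fs_merge1 i0 i1 (d - m) (m - 1) 1 (d - (m - 1)) (by omega)
          rw [h2, hfW' (m - 1) (by omega), mul_zero]
        · have h2 : (Finsupp.single i0 (d - m) + Finsupp.single i1 (m - 1))
              + Finsupp.single i1 1 = B m := by
            simp only [hB]
            exact fs_merge2 i0 i1 (d - m) (m - 1) 1 m (by omega)
          rw [h2, hfW' m (by omega), mul_zero]
  -- T ≤ V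
  have hTV : T ≤ V := by
    rw [hT, Submodule.span_le]
    rintro p (⟨u, hu1, -, rfl⟩ | ⟨i, j, rfl⟩)
    · show (monomial u (1 : K)).IsHomogeneous d
      exact isHomogeneous_monomial _ (by rw [sum_univ_eq_degree, hu1])
    · show (X j * pderiv i f).IsHomogeneous d
      have h1 := (isHomogeneous_X K j).mul (pderiv_isHomogeneous hf i)
      have h2 : 1 + (d - 1) = d := by omega
      rwa [h2] at h1
  haveI hVfd : FiniteDimensional K V := by
    apply Submodule.finiteDimensional_of_le (S₂ := restrictTotalDegree (Fin (n + 1)) K d)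
    intro p hp
    rw [mem_restrictTotalDegree]
    exact ((mem_homogeneousSubmodule _ _).mp hp).totalDegree_le
  haveI hTfd : FiniteDimensional K T := Submodule.finiteDimensional_of_le hTV
  set Φ : MvPolynomial (Fin (n + 1)) K →ₗ[K] (Fin (d - 1) → K) :=
    LinearMap.pi (fun m : Fin (d - 1) => lcoeff (R := K) (B ↑m)) with hΦ
  haveI : FiniteDimensional K ↥(V ⊓ LinearMap.ker Φ) :=
    Submodule.finiteDimensional_of_le inf_le_left
  have hsumsingle : ∀ (a : Fin (n + 1)) (b : ℕ), (∑ x, Finsupp.single a b x) = b := by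
    intro a b
    rw [Finset.sum_eq_single a]
    · exact Finsupp.single_eq_same
    · intro x _ hx; exact Finsupp.single_eq_of_ne' (Ne.symm hx)
    · intro h; exact absurd (Finset.mem_univ a) h
  have hmapV : Submodule.map Φ V = ⊤ := by
    rw [Submodule.eq_top_iff']
    intro y
    refine ⟨∑ m : Fin (d - 1), y m • monomial (B ↑m) (1 : K), ?_, ?_⟩
    · refine Submodule.sum_mem _ fun m _ => Submodule.smul_mem _ _ ?_
      show (monomial (B ↑m) (1 : K)).IsHomogeneous d
      apply isHomogeneous_monomial
      rw [sum_univ_eq_degree]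
      simp only [hB, Finsupp.add_apply]
      rw [Finset.sum_add_distrib, hsumsingle, hsumsingle]
      omega
    · funext m'
      simp only [hΦ, map_sum, map_smul, LinearMap.pi_apply, lcoeff_apply,
        Finset.sum_apply, Pi.smul_apply, smul_eq_mul, coeff_monomial]
      rw [Finset.sum_eq_single m']
      · rw [if_pos rfl, mul_one]
      · intro b _ hb
        rw [if_neg, mul_zero]
        intro hEq
        apply hb
        have h := congrArg (fun u : Fin (n + 1) →₀ ℕ => u i1) hEq
        simp only [hB_i1] at h
        exact Fin.ext h
      · intro h; exact absurd (Finset.mem_univ m') h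
  set hfun : Fin (n - 1) × Fin 2 → (Fin (d - 1) → K) :=
    fun ab => Φ (X (⟨(ab.2 : ℕ), by omega⟩ : Fin (n + 1))
      * pderiv (⟨(ab.1 : ℕ) + 2, by omega⟩ : Fin (n + 1)) f) with hhfun
  set U : Submodule K (Fin (d - 1) → K) := Submodule.span K (Set.range hfun) with hU
  haveI : FiniteDimensional K U := FiniteDimensional.span_of_finite K (Set.finite_range hfun)
  have hmapT : Submodule.map Φ T ≤ U := by
    rw [hT, Submodule.map_span, Submodule.span_le]
    rintro q ⟨p, hp, rfl⟩
    rcases hp with ⟨u, hu1, hu2, rfl⟩ | ⟨i, j, rfl⟩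
    · have hz : Φ (monomial u (1 : K)) = 0 := by
        funext m'
        simp only [hΦ, LinearMap.pi_apply, lcoeff_apply, coeff_monomial, Pi.zero_apply]
        rw [if_neg (hu2 ↑m' (by omega))]
      rw [hz]
      exact Submodule.zero_mem U
    · by_cases hij : 2 ≤ (i : ℕ) ∧ (j : ℕ) < 2
      · obtain ⟨hi2, hj2⟩ := hij
        apply Submodule.subset_span
        refine ⟨(⟨(i : ℕ) - 2, by omega⟩, ⟨(j : ℕ), hj2⟩), ?_⟩
        have ei : (⟨(i : ℕ) - 2 + 2, by omega⟩ : Fin (n + 1)) = i :=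
          Fin.ext (by simp; omega)
        have ej : (⟨(j : ℕ), by omega⟩ : Fin (n + 1)) = j := Fin.ext rfl
        refine congrArg Φ ?_
        congr 1 <;>
          first
            | exact congrArg (fun t : Fin (n + 1) => (X t : MvPolynomial (Fin (n + 1)) K)) ej
            | exact congrArg (fun t : Fin (n + 1) => pderiv t f) ei
      · have hz : Φ (X j * pderiv i f) = 0 := by
          funext m'
          simp only [hΦ, LinearMap.pi_apply, lcoeff_apply, Pi.zero_apply]
          rcases Nat.lt_or_ge (j : ℕ) 2 with hj2 | hj2
          · have hi2 : (i : ℕ) < 2 := by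
              by_contra hcon
              exact hij ⟨by omega, hj2⟩
            exact key2 ↑m' (by omega) i j hi2 hj2
          · exact key1 ↑m' j hj2 _
        rw [hz]
        exact Submodule.zero_mem U
  have hUrank : Module.finrank K U ≤ 2 * n - 2 := by
    have h1 := finrank_span_le_card (R := K) (Set.range hfun)
    have h2 : (Set.range hfun).toFinset.card ≤ (n - 1) * 2 := by
      rw [Set.toFinset_range]
      calc (Finset.univ.image hfun).card
          ≤ (Finset.univ : Finset (Fin (n - 1) × Fin 2)).card := Finset.card_image_le
        _ = (n - 1) * 2 := by simp
    rw [hU]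
    exact le_trans h1 (le_trans h2 (by omega))
  have e1 := rank_split Φ V
  have e2 := rank_split Φ T
  have e3 : Module.finrank K (Submodule.map Φ V) = d - 1 := by
    rw [hmapV, finrank_top, Module.finrank_fin_fun]
  have e4 : Module.finrank K (Submodule.map Φ T) ≤ 2 * n - 2 :=
    le_trans (Submodule.finrank_mono hmapT) hUrank
  have e5 : Module.finrank K ↥(T ⊓ LinearMap.ker Φ)
      ≤ Module.finrank K ↥(V ⊓ LinearMap.ker Φ) :=
    Submodule.finrank_mono (inf_le_inf_right _ hTV)
  have goal2 : Module.finrank K T + (d - 1 - (2 * n - 2)) ≤ Module.finrank K V := by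
    omega
  refine ⟨lt_of_le_of_ne hTV fun hEq => ?_, goal2⟩
  rw [hEq] at goal2
  omega
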